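/- Let q₀ ≥ 2 be a natural number and γ₀ a complex number. Let J be a finite index set, and for each j ∈ J let q_j ≥ 2 be a natural number coprime to q₀ and γ_j a complex number. Then the intersection of the set {γ₀ + 2πik/log q₀ : k ∈ ℤ} with the union over j ∈ J of the sets {γ_j + 2πim/log q_j : m ∈ ℤ} is finite. In particular, all but finitely many of the points γ₀ + 2πik/log q₀, k ∈ ℤ, lie outside this union. -/
import Mathlib

lemma mul_indep_aux (q₀ q₁ : ℕ) (h0 : 2 ≤ q₀) (h1 : 2 ≤ q₁) (hcop : Nat.Coprime q₀ q₁)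
    (a b : ℕ) (h : (a : ℝ) * Real.log q₁ = b * Real.log q₀) : a = 0 := by
  by_contra ha
  have hlog : Real.log ((q₁ : ℝ) ^ a) = Real.log ((q₀ : ℝ) ^ b) := by
    rw [Real.log_pow, Real.log_pow]; linarith
  have hp0 : (0:ℝ) < (q₀:ℝ) ^ b := by positivity
  have hp1 : (0:ℝ) < (q₁:ℝ) ^ a := by positivity
  have heq : (q₁ : ℝ) ^ a = (q₀ : ℝ) ^ b := by
    have := congrArg Real.exp hlog
    rwa [Real.exp_log hp1, Real.exp_log hp0] at this
  have hnat : q₁ ^ a = q₀ ^ b := by exact_mod_cast heq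
  rcases Nat.eq_zero_or_pos b with hb | hb
  · subst hb
    simp at hnat
    have : 2 ^ 1 ≤ q₁ ^ a := Nat.pow_le_pow_left h1 1 |>.trans
      (Nat.pow_le_pow_right (by omega) (Nat.one_le_iff_ne_zero.mpr ha))
    omega
  · have hdvd : q₀ ∣ q₁ ^ a := hnat ▸ dvd_pow_self q₀ hb.ne'
    have := (hcop.pow_right a).eq_one_of_dvd hdvd
    omega

lemma mul_indep (q₀ q₁ : ℕ) (h0 : 2 ≤ q₀) (h1 : 2 ≤ q₁) (hcop : Nat.Coprime q₀ q₁)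
    (K M : ℤ) (h : (K : ℝ) * Real.log q₁ = M * Real.log q₀) : K = 0 := by
  have l0 : 0 < Real.log q₀ := Real.log_pos (by exact_mod_cast h0)
  have l1 : 0 < Real.log q₁ := Real.log_pos (by exact_mod_cast h1)
  rcases lt_trichotomy K 0 with hK | hK | hK
  · exfalso
    have hM : M < 0 := by
      by_contra hM
      push_neg at hM
      nlinarith [(by exact_mod_cast hK : (K:ℝ) < 0), (by exact_mod_cast hM : (0:ℝ) ≤ M)]
    have h' : ((-K).toNat : ℝ) * Real.log q₁ = ((-M).toNat : ℝ) * Real.log q₀ := by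
      have e1 : ((-K).toNat : ℝ) = -(K:ℝ) := by
        exact_mod_cast Int.toNat_of_nonneg (by omega : (0:ℤ) ≤ -K)
      have e2 : ((-M).toNat : ℝ) = -(M:ℝ) := by
        exact_mod_cast Int.toNat_of_nonneg (by omega : (0:ℤ) ≤ -M)
      rw [e1, e2]; linarith
    have h0' := mul_indep_aux q₀ q₁ h0 h1 hcop _ _ h'
    omega
  · exact hK
  · exfalso
    have hM : 0 < M := by
      by_contra hM
      push_neg at hM
      nlinarith [(by exact_mod_cast hK : (0:ℝ) < K), (by exact_mod_cast hM : (M:ℝ) ≤ 0)]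
    have h' : (K.toNat : ℝ) * Real.log q₁ = (M.toNat : ℝ) * Real.log q₀ := by
      have e1 : (K.toNat : ℝ) = (K:ℝ) := by
        exact_mod_cast Int.toNat_of_nonneg (by omega : (0:ℤ) ≤ K)
      have e2 : (M.toNat : ℝ) = (M:ℝ) := by
        exact_mod_cast Int.toNat_of_nonneg (by omega : (0:ℤ) ≤ M)
      rw [e1, e2]; exact h
    have h0' := mul_indep_aux q₀ q₁ h0 h1 hcop _ _ h'
    omega

/-- Let `q₀ ≥ 2`, and for each `j` in a finite index set let `q j ≥ 2` be coprime to `q₀`.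
Then the arithmetic progression `{γ₀ + 2πik/log q₀ : k ∈ ℤ}` meets the union of the
progressions `{γ j + 2πim/log (q j) : m ∈ ℤ}` in only finitely many points. -/
theorem progression_meets_finitely_many_progressions_finitely
    (q₀ : ℕ) (hq₀ : 2 ≤ q₀) (γ₀ : ℂ) (J : Type*) [Fintype J]
    (q : J → ℕ) (hq : ∀ j, 2 ≤ q j) (hcop : ∀ j, Nat.Coprime q₀ (q j)) (γ : J → ℂ) :
    Set.Finite
      ({z : ℂ | ∃ k : ℤ, z = γ₀ + ((2 * Real.pi * k / Real.log q₀ : ℝ) : ℂ) * Complex.I} ∩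
       ⋃ j : J,
         {z : ℂ | ∃ m : ℤ, z = γ j + ((2 * Real.pi * m / Real.log (q j) : ℝ) : ℂ) * Complex.I}) := by
  rw [Set.inter_iUnion]
  apply Set.finite_iUnion
  intro j
  apply Set.Subsingleton.finite
  rintro z ⟨⟨k, hk⟩, m, hm⟩ z' ⟨⟨k', hk'⟩, m', hm'⟩
  have l0 : 0 < Real.log q₀ := Real.log_pos (by exact_mod_cast hq₀)
  have l1 : 0 < Real.log (q j) := Real.log_pos (by exact_mod_cast hq j)
  have hdiff : ((2 * Real.pi * k / Real.log q₀ - 2 * Real.pi * k' / Real.log q₀ : ℝ) : ℂ)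
      = ((2 * Real.pi * m / Real.log (q j) - 2 * Real.pi * m' / Real.log (q j) : ℝ) : ℂ) := by
    have h1 : z - z' = (((2 * Real.pi * k / Real.log q₀
        - 2 * Real.pi * k' / Real.log q₀ : ℝ)) : ℂ) * Complex.I := by
      rw [hk, hk']; push_cast; ring
    have h2 : z - z' = (((2 * Real.pi * m / Real.log (q j)
        - 2 * Real.pi * m' / Real.log (q j) : ℝ)) : ℂ) * Complex.I := by
      rw [hm, hm']; push_cast; ring
    exact mul_right_cancel₀ Complex.I_ne_zero (h1 ▸ h2)
  have hre : 2 * Real.pi * k / Real.log q₀ - 2 * Real.pi * k' / Real.log q₀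
      = 2 * Real.pi * m / Real.log (q j) - 2 * Real.pi * m' / Real.log (q j) :=
    Complex.ofReal_inj.mp hdiff
  have hKM : ((k - k' : ℤ) : ℝ) * Real.log (q j) = ((m - m' : ℤ) : ℝ) * Real.log q₀ := by
    have hπ : (0:ℝ) < 2 * Real.pi := by positivity
    push_cast
    field_simp at hre
    nlinarith [hre, Real.pi_pos]
  have := mul_indep q₀ (q j) hq₀ (hq j) (hcop j) _ _ hKM
  have hkk : k = k' := by omega
  rw [hk, hk', hkk]
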